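/- Let U be a k-vector space and let A be a 2×2 matrix with entries a₁₁, a₁₂, a₂₁, a₂₂ ∈ U such that the span of the four entries is 3-dimensional, and such that no nontrivial linear combination of the two columns of A has the form (λ₁·v, λ₂·v) for a single vector v ∈ U and scalars λ₁, λ₂. Then there exists g ∈ GL₂(k) and linearly independent vectors e₁, e₂, e₃ ∈ U such that A·g = [[e₁, e₂],[e₃, e₁]]. -/
import Mathlib


/- STATEMENT 5: If the entries of a 2×2 matrix `A` with entries in a vector space `U`
span a 3-dimensional subspace and no nontrivial linear combination of the columns of `A`
has the form `(λ₁·v, λ₂·v)`, then after a column operation `g ∈ GL₂(k)` the matrix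
becomes `[[e₁, e₂], [e₃, e₁]]` with `e₁, e₂, e₃` linearly independent. -/

theorem span3_normal_form
    {k U : Type} [Field k] [IsAlgClosed k] [CharZero k]
    [AddCommGroup U] [Module k U]
    (A : Matrix (Fin 2) (Fin 2) U)
    (hspan : Module.finrank k (Submodule.span k {A 0 0, A 0 1, A 1 0, A 1 1}) = 3)
    (hcol : ∀ c : Fin 2 → k, c ≠ 0 →
      ¬ ∃ (v : U) (l₁ l₂ : k),
          c 0 • A 0 0 + c 1 • A 0 1 = l₁ • v ∧ c 0 • A 1 0 + c 1 • A 1 1 = l₂ • v) :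
    ∃ (g : GL (Fin 2) k) (e₁ e₂ e₃ : U), LinearIndependent k ![e₁, e₂, e₃] ∧
      (Matrix.of fun i j => ∑ l : Fin 2, ((g : Matrix (Fin 2) (Fin 2) k) l j) • A i l)
        = Matrix.of ![![e₁, e₂], ![e₃, e₁]] := by
  classical
  have hrange : Set.range ![A 0 0, A 0 1, A 1 0, A 1 1] = {A 0 0, A 0 1, A 1 0, A 1 1} := by
    ext x
    simp [Fin.exists_fin_succ, or_assoc, eq_comm]
    tauto
  -- a nontrivial linear relation among the entries
  have hnli : ¬ LinearIndependent k ![A 0 0, A 0 1, A 1 0, A 1 1] := by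
    intro h
    have h4 := finrank_span_eq_card h
    rw [hrange] at h4
    rw [hspan] at h4
    simp at h4
  obtain ⟨c, hc, i₀, hi₀⟩ := Fintype.not_linearIndependent_iff.mp hnli
  have hrel : c 0 • A 0 0 + c 1 • A 0 1 + c 2 • A 1 0 + c 3 • A 1 1 = 0 := by
    rw [Fin.sum_univ_four] at hc
    simpa [add_assoc] using hc
  -- the relation matrix is nonsingular
  have hdet : c 0 * c 3 - c 1 * c 2 ≠ 0 := by
    intro hd
    by_cases h01 : c 0 = 0 ∧ c 1 = 0
    · obtain ⟨h0, h1⟩ := h01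
      have h23 : ¬ (c 2 = 0 ∧ c 3 = 0) := by
        rintro ⟨h2, h3⟩
        fin_cases i₀ <;> simp_all
      have hz : c 2 • A 1 0 + c 3 • A 1 1 = 0 := by
        have h := hrel
        rw [h0, h1] at h
        simpa [add_assoc] using h
      refine hcol ![c 2, c 3] ?_ ⟨c 2 • A 0 0 + c 3 • A 0 1, 1, 0, by simp, by simp [hz]⟩
      intro h
      exact h23 ⟨by simpa using congrFun h 0, by simpa using congrFun h 1⟩
    · obtain ⟨t, h2, h3⟩ : ∃ t, c 2 = t * c 0 ∧ c 3 = t * c 1 := by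
        rcases eq_or_ne (c 0) 0 with h0 | h0
        · have h1 : c 1 ≠ 0 := by tauto
          have h2 : c 2 = 0 := by
            have : c 1 * c 2 = 0 := by linear_combination -hd + c 3 * h0
            rcases mul_eq_zero.mp this with h | h
            · exact absurd h h1
            · exact h
          exact ⟨c 3 / c 1, by rw [h2, h0, mul_zero], by field_simp⟩
        · refine ⟨c 2 / c 0, by field_simp, ?_⟩
          rw [div_mul_eq_mul_div, eq_div_iff h0]
          linear_combination hd
      have h := hrel
      rw [h2, h3] at h
      refine hcol ![c 0, c 1] ?_ ⟨c 0 • A 1 0 + c 1 • A 1 1, -t, 1, ?_, by simp⟩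
      · intro hh
        exact h01 ⟨by simpa using congrFun hh 0, by simpa using congrFun hh 1⟩
      · simp only [Matrix.cons_val_zero, Matrix.cons_val_one, Matrix.head_cons]
        linear_combination (norm := module) h
  -- the column operation and the normal form entries
  set e₁ : U := c 0 • A 0 0 + c 1 • A 0 1 with he1
  set e₂ : U := (-(c 2)) • A 0 0 + (-(c 3)) • A 0 1 with he2
  set e₃ : U := c 0 • A 1 0 + c 1 • A 1 1 with he3
  have he1' : e₁ = (-(c 2)) • A 1 0 + (-(c 3)) • A 1 1 := by
    rw [he1]
    linear_combination (norm := module) hrel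
  have hm : (!![c 0, -(c 2); c 1, -(c 3)] : Matrix (Fin 2) (Fin 2) k).det ≠ 0 := by
    rw [Matrix.det_fin_two_of]
    intro h
    exact hdet (by linear_combination -h)
  set g : GL (Fin 2) k := Matrix.GeneralLinearGroup.mkOfDetNeZero _ hm with hgdef
  have hg : (g : Matrix (Fin 2) (Fin 2) k) = !![c 0, -(c 2); c 1, -(c 3)] := rfl
  -- the spans agree
  set d : k := c 1 * c 2 - c 0 * c 3 with hd'
  have hdne : d ≠ 0 := fun h => hdet (by linear_combination -h)
  have hspan2 : Submodule.span k {e₁, e₂, e₃} = Submodule.span k {A 0 0, A 0 1, A 1 0, A 1 1} := by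
    apply le_antisymm
    · rw [Submodule.span_le]
      rintro x (rfl | rfl | rfl)
      · exact Submodule.add_mem _
          (Submodule.smul_mem _ _ (Submodule.subset_span (by simp)))
          (Submodule.smul_mem _ _ (Submodule.subset_span (by simp)))
      · exact Submodule.add_mem _
          (Submodule.smul_mem _ _ (Submodule.subset_span (by simp)))
          (Submodule.smul_mem _ _ (Submodule.subset_span (by simp)))
      · exact Submodule.add_mem _
          (Submodule.smul_mem _ _ (Submodule.subset_span (by simp)))
          (Submodule.smul_mem _ _ (Submodule.subset_span (by simp)))
    · rw [Submodule.span_le]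
      have mem1 : e₁ ∈ Submodule.span k {e₁, e₂, e₃} := Submodule.subset_span (by simp)
      have mem2 : e₂ ∈ Submodule.span k {e₁, e₂, e₃} := Submodule.subset_span (by simp)
      have mem3 : e₃ ∈ Submodule.span k {e₁, e₂, e₃} := Submodule.subset_span (by simp)
      rintro x (rfl | rfl | rfl | rfl)
      · rw [SetLike.mem_coe, ← Submodule.smul_mem_iff _ hdne]
        have : d • A 0 0 = (-(c 3)) • e₁ + (-(c 1)) • e₂ := by
          rw [he1, he2, hd']; module
        rw [this]
        exact Submodule.add_mem _ (Submodule.smul_mem _ _ mem1) (Submodule.smul_mem _ _ mem2)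
      · rw [SetLike.mem_coe, ← Submodule.smul_mem_iff _ hdne]
        have : d • A 0 1 = c 2 • e₁ + c 0 • e₂ := by
          rw [he1, he2, hd']; module
        rw [this]
        exact Submodule.add_mem _ (Submodule.smul_mem _ _ mem1) (Submodule.smul_mem _ _ mem2)
      · rw [SetLike.mem_coe, ← Submodule.smul_mem_iff _ hdne]
        have : d • A 1 0 = (-(c 3)) • e₃ + (-(c 1)) • e₁ := by
          rw [he1', he3, hd']; module
        rw [this]
        exact Submodule.add_mem _ (Submodule.smul_mem _ _ mem3) (Submodule.smul_mem _ _ mem1)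
      · rw [SetLike.mem_coe, ← Submodule.smul_mem_iff _ hdne]
        have : d • A 1 1 = c 2 • e₃ + c 0 • e₁ := by
          rw [he1', he3, hd']; module
        rw [this]
        exact Submodule.add_mem _ (Submodule.smul_mem _ _ mem3) (Submodule.smul_mem _ _ mem1)
  have hrange3 : Set.range ![e₁, e₂, e₃] = {e₁, e₂, e₃} := by
    ext x
    simp [Fin.exists_fin_succ, or_assoc, eq_comm]
    tauto
  refine ⟨g, e₁, e₂, e₃, ?_, ?_⟩
  · rw [linearIndependent_iff_card_eq_finrank_span]
    rw [Set.finrank, hrange3, hspan2, hspan]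
    simp
  · ext i j
    fin_cases i <;> fin_cases j
    · simp [hg, Fin.sum_univ_two, he1]
    · simp [hg, Fin.sum_univ_two, he2]
    · simp [hg, Fin.sum_univ_two, he3]
    · simp [hg, Fin.sum_univ_two, he1']
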